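/- arXiv:1309.5996 — 2 statements merged into one kernel-verified Lean document; each statement's English description precedes it below -/
import Mathlib

section
/- Let f : S → E be a strictly increasing function from a set S of epsilon numbers into the epsilon numbers, and let x, y be ordinals all of whose hereditary epsilon-number constituents lie in S. Then x < y if and only if x[f] < y[f], where x[f] denotes the result of simultaneously substituting each epsilon number e occurring in the Cantor normal form of x (hereditarily) by f(e). -/
open Ordinal

/-- An ordinal is an epsilon number if it is a fixed point of `ω ^ ·`. -/
def IsEpsilon (x : Ordinal.{0}) : Prop := ω ^ x = x

theorem cnf_fst_lt {x : Ordinal.{0}} (h : ¬ ω ^ x = x) {p : Ordinal × Ordinal}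
    (hp : p ∈ CNF ω x) : p.1 < x := by
  have hx : x ≠ 0 := by
    rintro rfl
    simp [Ordinal.CNF.zero_right] at hp
  have h1 : p.1 ≤ Ordinal.log ω x := Ordinal.CNF.fst_le_log hp
  have h2 : Ordinal.log ω x < x := by
    rcases lt_or_eq_of_le (Ordinal.log_le_self ω x) with h' | h'
    · exact h'
    · exfalso
      have hle := Ordinal.opow_log_le_self ω hx
      rw [h'] at hle
      exact h (le_antisymm hle (Ordinal.right_le_opow x one_lt_omega0))
  exact lt_of_le_of_lt h1 h2

open scoped Classical in
/-- The set of epsilon numbers occurring hereditarily in the Cantor normal form of `x`. -/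
noncomputable def Ep (x : Ordinal.{0}) : Set Ordinal.{0} :=
  if h : ω ^ x = x then {x}
  else ⋃ p : {q // q ∈ CNF ω x}, Ep p.1.1
termination_by x
decreasing_by exact cnf_fst_lt h p.2

open scoped Classical in
/-- Simultaneous substitution of the epsilon numbers occurring hereditarily in the
Cantor normal form of `x` by their values under `f`. -/
noncomputable def subst (f : Ordinal.{0} → Ordinal.{0}) (x : Ordinal.{0}) : Ordinal.{0} :=
  if h : ω ^ x = x then f x
  else (((CNF ω x).attach).map (fun p => ω ^ subst f p.1.1 * p.1.2)).sum
termination_by x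
decreasing_by exact cnf_fst_lt h p.2


open Ordinal List

namespace EpAux

def R (p q : Ordinal.{0} × Ordinal.{0}) : Prop := p.1 < q.1 ∨ (p.1 = q.1 ∧ p.2 < q.2)

noncomputable def sumL (l : List (Ordinal.{0} × Ordinal.{0})) : Ordinal.{0} :=
  l.foldr (fun p r => ω ^ p.1 * p.2 + r) 0

def Good (l : List (Ordinal.{0} × Ordinal.{0})) : Prop :=
  l.Pairwise (fun p q => q.1 < p.1) ∧ ∀ p ∈ l, 0 < p.2 ∧ p.2 < ω

theorem sumL_nil : sumL [] = 0 := rfl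
theorem sumL_cons (p : Ordinal × Ordinal) (l : List (Ordinal × Ordinal)) :
    sumL (p :: l) = ω ^ p.1 * p.2 + sumL l := rfl

theorem lemA {l : List (Ordinal × Ordinal)} (hl : ∀ p ∈ l, p.2 < ω) {e : Ordinal}
    (he : ∀ p ∈ l, p.1 < e) : sumL l < ω ^ e := by
  induction l with
  | nil => simpa [sumL_nil] using opow_pos e omega0_pos
  | cons p t ih =>
    rw [sumL_cons]
    apply principal_add_omega0_opow
    · calc ω ^ p.1 * p.2 < ω ^ p.1 * ω :=
            mul_lt_mul_of_pos_left (hl p (mem_cons_self)) (opow_pos _ omega0_pos)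
        _ = ω ^ (p.1 + 1) := by rw [opow_add, opow_one]
        _ ≤ ω ^ e := opow_le_opow_right omega0_pos
            (Order.add_one_le_of_lt (he p (mem_cons_self)))
    · exact ih (fun q hq => hl q (mem_cons_of_mem _ hq))
        (fun q hq => he q (mem_cons_of_mem _ hq))

theorem good_tail {p : Ordinal × Ordinal} {l : List (Ordinal × Ordinal)}
    (h : Good (p :: l)) : Good l :=
  ⟨h.1.of_cons, fun q hq => h.2 q (mem_cons_of_mem _ hq)⟩

theorem lex_sumL : ∀ {l₁ l₂ : List (Ordinal × Ordinal)}, List.Lex R l₁ l₂ →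
    Good l₁ → Good l₂ → sumL l₁ < sumL l₂ := by
  intro l₁ l₂ h
  induction h with
  | @nil b l =>
    intro _ h₂
    rw [sumL_nil, sumL_cons]
    have hb : 0 < b.2 := (h₂.2 b (mem_cons_self)).1
    exact lt_of_lt_of_le (mul_pos (opow_pos _ omega0_pos) hb) le_self_add
  | @rel a l₁' b l₂' hab =>
    intro h₁ h₂
    rw [sumL_cons, sumL_cons]
    rcases hab with h | ⟨he, hc⟩
    · have hall : ∀ q ∈ (a :: l₁'), q.1 < b.1 := by
        intro q hq
        rcases mem_cons.1 hq with rfl | hq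
        · exact h
        · exact lt_trans (rel_of_pairwise_cons h₁.1 hq) h
      have h1 : sumL (a :: l₁') < ω ^ b.1 :=
        lemA (fun q hq => (h₁.2 q hq).2) hall
      have h2 : ω ^ b.1 ≤ ω ^ b.1 * b.2 :=
        le_mul_of_one_le_right (zero_le)
          (Order.one_le_iff_pos.2 (h₂.2 b (mem_cons_self)).1)
      calc sumL (a :: l₁') < ω ^ b.1 := h1
        _ ≤ ω ^ b.1 * b.2 := h2
        _ ≤ ω ^ b.1 * b.2 + sumL l₂' := le_self_add
    · have h1 : sumL l₁' < ω ^ a.1 :=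
        lemA (fun q hq => (h₁.2 q (mem_cons_of_mem _ hq)).2)
          (fun q hq => rel_of_pairwise_cons h₁.1 hq)
      calc ω ^ a.1 * a.2 + sumL l₁' < ω ^ a.1 * a.2 + ω ^ a.1 := add_lt_add_right h1 _
        _ = ω ^ a.1 * (a.2 + 1) := by rw [mul_add, mul_one]
        _ ≤ ω ^ a.1 * b.2 := mul_le_mul_right
            (Order.add_one_le_of_lt hc) _
        _ = ω ^ b.1 * b.2 := by rw [he]
        _ ≤ ω ^ b.1 * b.2 + sumL l₂' := le_self_add
  | @cons a l₁' l₂' h' ih =>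
    intro h₁ h₂
    rw [sumL_cons, sumL_cons]
    exact add_lt_add_right (ih (good_tail h₁) (good_tail h₂)) _

theorem lex_trich : ∀ l₁ l₂ : List (Ordinal × Ordinal),
    List.Lex R l₁ l₂ ∨ l₁ = l₂ ∨ List.Lex R l₂ l₁ := by
  intro l₁
  induction l₁ with
  | nil =>
    intro l₂
    cases l₂ with
    | nil => exact Or.inr (Or.inl rfl)
    | cons q s => exact Or.inl List.Lex.nil
  | cons p t ih =>
    intro l₂
    cases l₂ with
    | nil => exact Or.inr (Or.inr List.Lex.nil)
    | cons q s =>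
      rcases lt_trichotomy p.1 q.1 with h | h | h
      · exact Or.inl (List.Lex.rel (Or.inl h))
      · rcases lt_trichotomy p.2 q.2 with h2 | h2 | h2
        · exact Or.inl (List.Lex.rel (Or.inr ⟨h, h2⟩))
        · have hpq : p = q := Prod.ext h h2
          subst hpq
          rcases ih s with h3 | h3 | h3
          · exact Or.inl (List.Lex.cons h3)
          · exact Or.inr (Or.inl (by rw [h3]))
          · exact Or.inr (Or.inr (List.Lex.cons h3))
        · exact Or.inr (Or.inr (List.Lex.rel (Or.inr ⟨h.symm, h2⟩)))
      · exact Or.inr (Or.inr (List.Lex.rel (Or.inl h)))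

theorem sumL_lt_iff {l₁ l₂ : List (Ordinal × Ordinal)} (h₁ : Good l₁) (h₂ : Good l₂) :
    sumL l₁ < sumL l₂ ↔ List.Lex R l₁ l₂ := by
  constructor
  · intro h
    rcases lex_trich l₁ l₂ with hl | hl | hl
    · exact hl
    · exact absurd h (by rw [hl]; exact lt_irrefl _)
    · exact absurd h (lt_asymm (lex_sumL hl h₂ h₁))
  · intro h
    exact lex_sumL h h₁ h₂

theorem lex_asymm : ∀ l₁ l₂ : List (Ordinal × Ordinal),
    List.Lex R l₁ l₂ → List.Lex R l₂ l₁ → False := by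
  intro l₁
  induction l₁ with
  | nil => intro l₂ _ h₂; cases h₂
  | cons p t ih =>
    intro l₂ h₁ h₂
    cases l₂ with
    | nil => cases h₁
    | cons q s =>
      cases h₁ with
      | cons h₁' =>
        cases h₂ with
        | cons h₂' => exact ih s h₁' h₂'
        | rel hab =>
          rcases hab with h | ⟨_, h⟩ <;> exact lt_irrefl _ h
      | rel hab =>
        cases h₂ with
        | cons h₂' =>
          rcases hab with h | ⟨_, h⟩ <;> exact lt_irrefl _ h
        | rel hba =>
          rcases hab with h | ⟨he, h⟩ <;> rcases hba with h' | ⟨he', h'⟩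
          · exact lt_asymm h h'
          · exact lt_irrefl _ (he' ▸ h)
          · exact lt_irrefl _ (he ▸ h')
          · exact lt_asymm h h'

theorem lex_map_fwd (g : Ordinal → Ordinal) :
    ∀ l₁ l₂ : List (Ordinal × Ordinal),
    (∀ p ∈ l₁, ∀ q ∈ l₂, (p.1 < q.1 ↔ g p.1 < g q.1) ∧ (p.1 = q.1 ↔ g p.1 = g q.1)) →
    List.Lex R l₁ l₂ →
      List.Lex R (l₁.map (fun p => (g p.1, p.2))) (l₂.map (fun p => (g p.1, p.2))) := by
  intro l₁
  induction l₁ with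
  | nil =>
    intro l₂ _ h
    cases l₂ with
    | nil => cases h
    | cons q s => exact List.Lex.nil
  | cons p t ih =>
    intro l₂ H h
    cases l₂ with
    | nil => cases h
    | cons q s =>
      have Hpq := H p (mem_cons_self) q (mem_cons_self)
      simp only [map_cons]
      cases h with
      | cons h' =>
        exact List.Lex.cons (ih s (fun a ha b hb =>
          H a (mem_cons_of_mem _ ha) b (mem_cons_of_mem _ hb)) h')
      | rel hab =>
        rcases hab with h | ⟨he, hc⟩
        · exact List.Lex.rel (Or.inl (Hpq.1.1 h))
        · exact List.Lex.rel (Or.inr ⟨Hpq.2.1 he, hc⟩)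

theorem lex_map_iff (g : Ordinal → Ordinal)
    (l₁ l₂ : List (Ordinal × Ordinal))
    (H : ∀ p ∈ l₁, ∀ q ∈ l₂, (p.1 < q.1 ↔ g p.1 < g q.1) ∧ (p.1 = q.1 ↔ g p.1 = g q.1)) :
    List.Lex R l₁ l₂ ↔
      List.Lex R (l₁.map (fun p => (g p.1, p.2))) (l₂.map (fun p => (g p.1, p.2))) := by
  constructor
  · exact lex_map_fwd g l₁ l₂ H
  · intro h
    rcases lex_trich l₁ l₂ with hl | hl | hl
    · exact hl
    · exact absurd (hl ▸ h) (fun hh => lex_asymm _ _ hh hh)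
    · have H' : ∀ q ∈ l₂, ∀ p ∈ l₁,
          (q.1 < p.1 ↔ g q.1 < g p.1) ∧ (q.1 = p.1 ↔ g q.1 = g p.1) := by
        intro q hq p hp
        have h1 := (H p hp q hq).1
        have h2 := (H p hp q hq).2
        constructor
        · constructor
          · intro hlt
            rcases lt_trichotomy (g q.1) (g p.1) with h' | h' | h'
            · exact h'
            · exact absurd (h2.2 h'.symm) (ne_of_gt hlt)
            · exact absurd (h1.2 h') (lt_asymm hlt)
          · intro hlt
            rcases lt_trichotomy q.1 p.1 with h' | h' | h'
            · exact h'
            · exact absurd (h2.1 h'.symm ▸ hlt) (lt_irrefl _)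
            · exact absurd (h1.1 h') (lt_asymm hlt)
        · constructor
          · intro he; exact (h2.1 he.symm).symm
          · intro he; exact (h2.2 he.symm).symm
      exact absurd (lex_map_fwd g l₂ l₁ H' hl) (fun hh => lex_asymm _ _ h hh)

end EpAux
-- continuation: assumes defs IsEpsilon, Ep, subst, cnf_fst_lt and namespace EpAux lemmas
section Main

open List

noncomputable def hsum (x y : Ordinal.{0}) : Ordinal.{0} := ω ^ max x y + ω ^ min x y

infixl:65 " ♯ " => hsum

theorem hsum_comm (x y : Ordinal.{0}) : x ♯ y = y ♯ x := by
  unfold hsum; rw [max_comm, min_comm]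

theorem hsum_lt_left {a b : Ordinal.{0}} (h : a < b) (y : Ordinal.{0}) : a ♯ y < b ♯ y := by
  have hw : ∀ {c d : Ordinal.{0}}, c < d → ω ^ c < ω ^ d :=
    fun hcd => (opow_lt_opow_iff_right one_lt_omega0).2 hcd
  rcases le_or_gt y a with hya | hay
  · rw [hsum, hsum, max_eq_left hya, min_eq_right hya, max_eq_left (hya.trans h.le),
      min_eq_right (hya.trans h.le)]
    exact lt_of_lt_of_le (principal_add_omega0_opow b (hw h) (hw (lt_of_le_of_lt hya h)))
      le_self_add
  · rw [hsum, hsum, max_eq_right hay.le, min_eq_left hay.le]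
    rcases lt_or_ge y b with hyb | hby
    · rw [max_eq_left hyb.le, min_eq_right hyb.le]
      exact lt_of_lt_of_le (principal_add_omega0_opow b (hw hyb) (hw (hay.trans hyb)))
        le_self_add
    · rw [max_eq_right hby, min_eq_left hby]
      exact add_lt_add_right (hw h) _

theorem hsum_lt_right {a b : Ordinal.{0}} (h : a < b) (x : Ordinal.{0}) : x ♯ a < x ♯ b := by
  rw [hsum_comm x a, hsum_comm x b]; exact hsum_lt_left h x

theorem Ep_of_eps {x : Ordinal.{0}} (h : ω ^ x = x) : Ep x = {x} := by
  rw [Ep]; simp [h]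

theorem Ep_sub {x : Ordinal.{0}} (h : ¬ ω ^ x = x) {p : Ordinal × Ordinal}
    (hp : p ∈ CNF ω x) : Ep p.1 ⊆ Ep x := by
  conv_rhs => rw [Ep]
  rw [dif_neg h]
  exact Set.subset_iUnion (fun q : {q // q ∈ CNF ω x} => Ep q.1.1) ⟨p, hp⟩

theorem subst_eps {f : Ordinal.{0} → Ordinal.{0}} {x : Ordinal.{0}} (h : ω ^ x = x) :
    subst f x = f x := by
  rw [subst]; simp [h]

theorem CNF_of_eps {x : Ordinal.{0}} (h : ω ^ x = x) : CNF ω x = [(x, 1)] := by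
  have hx0 : x ≠ 0 := by
    rintro rfl
    simpa using h
  have hlog : Ordinal.log ω x = x := by
    conv_lhs => rw [← h]
    rw [Ordinal.log_opow one_lt_omega0]
  rw [Ordinal.CNF.ne_zero hx0, hlog, h, Ordinal.div_self hx0, Ordinal.mod_self,
    Ordinal.CNF.zero_right]

theorem sum_map_eq (f : Ordinal.{0} → Ordinal.{0}) (l : List (Ordinal × Ordinal)) :
    (l.map (fun p => ω ^ subst f p.1 * p.2)).sum
      = EpAux.sumL (l.map (fun p => (subst f p.1, p.2))) := by
  induction l with
  | nil => rfl
  | cons p t ih => simp [EpAux.sumL_cons, ih]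

theorem subst_sumL (S : Set Ordinal.{0}) (f : Ordinal → Ordinal)
    (hfE : ∀ e ∈ S, IsEpsilon (f e)) {x : Ordinal} (hx : Ep x ⊆ S) :
    subst f x = EpAux.sumL ((CNF ω x).map (fun p => (subst f p.1, p.2))) := by
  by_cases h : ω ^ x = x
  · have hxS : x ∈ S := hx (by rw [Ep_of_eps h]; exact rfl)
    have hfx : ω ^ f x = f x := hfE x hxS
    rw [CNF_of_eps h, subst_eps h]
    simp [EpAux.sumL_cons, EpAux.sumL_nil, subst_eps h, hfx]
  · rw [subst, dif_neg h]
    rw [show ((CNF ω x).attach.map (fun p => ω ^ subst f p.1.1 * p.1.2)) = (CNF ω x).map (fun p => ω ^ subst f p.1 * p.2) from List.attach_map_val (f := fun (p : Ordinal.{0} × Ordinal.{0}) => ω ^ subst f p.1 * p.2)]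
    exact sum_map_eq f (CNF ω x)

theorem good_CNF (x : Ordinal.{0}) : EpAux.Good (CNF ω x) := by
  constructor
  · have h := Ordinal.CNF.sortedGT ω x
    rw [List.sortedGT_iff_pairwise, List.pairwise_map] at h
    exact h
  · intro p hp
    exact ⟨Ordinal.CNF.snd_pos hp, Ordinal.CNF.snd_lt one_lt_omega0 hp⟩

theorem stmt0' (S : Set Ordinal.{0}) (f : Ordinal → Ordinal)
    (hS : ∀ e ∈ S, IsEpsilon e) (hfE : ∀ e ∈ S, IsEpsilon (f e))
    (hf : StrictMonoOn f S)
    (x y : Ordinal) (hx : Ep x ⊆ S) (hy : Ep y ⊆ S) :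
    x < y ↔ subst f x < subst f y := by
  have key : ∀ M : Ordinal.{0}, ∀ N : Ordinal.{0}, ∀ x y : Ordinal.{0},
      max x y ≤ M → x ♯ y ≤ N → Ep x ⊆ S → Ep y ⊆ S →
      (x < y ↔ subst f x < subst f y) := by
    intro M
    induction M using Ordinal.induction with
    | h M ihM =>
    intro N
    induction N using Ordinal.induction with
    | h N ihN =>
    intro x y hM hN hx hy
    have IH2 : ∀ a b : Ordinal, Ep a ⊆ S → Ep b ⊆ S →
        (max a b < max x y ∨ (max a b = max x y ∧ a ♯ b < x ♯ y)) →
        (a < b ↔ subst f a < subst f b) := by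
      intro a b ha hb hlt
      rcases hlt with h | ⟨he, hn⟩
      · exact ihM _ (lt_of_lt_of_le h hM) _ a b le_rfl le_rfl ha hb
      · exact ihN _ (lt_of_lt_of_le hn hN) a b (le_trans (le_of_eq he) hM) le_rfl ha hb
    have IHiff : ∀ a b : Ordinal, Ep a ⊆ S → Ep b ⊆ S →
        (max a b < max x y ∨ (max a b = max x y ∧ a ♯ b < x ♯ y)) →
        ((a < b ↔ subst f a < subst f b) ∧ (a = b ↔ subst f a = subst f b)) := by
      intro a b ha hb h
      have hsym : max b a < max x y ∨ (max b a = max x y ∧ b ♯ a < x ♯ y) := by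
        rwa [max_comm b a, hsum_comm b a]
      have h1 := IH2 a b ha hb h
      have h2 := IH2 b a hb ha hsym
      refine ⟨h1, ?_, ?_⟩
      · intro he; rw [he]
      · intro he
        rcases lt_trichotomy a b with h' | h' | h'
        · exact absurd (h1.1 h') (by rw [he]; exact lt_irrefl _)
        · exact h'
        · exact absurd (h2.1 h') (by rw [he]; exact lt_irrefl _)
    by_cases hboth : ω ^ x = x ∧ ω ^ y = y
    · obtain ⟨hxe, hye⟩ := hboth
      have hxS : x ∈ S := hx (by rw [Ep_of_eps hxe]; exact rfl)
      have hyS : y ∈ S := hy (by rw [Ep_of_eps hye]; exact rfl)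
      rw [subst_eps hxe, subst_eps hye]
      exact (hf.lt_iff_lt hxS hyS).symm
    · -- general case
      have hmem₁ : ∀ p ∈ CNF ω x, Ep p.1 ⊆ S := by
        intro p hp
        by_cases hxe : ω ^ x = x
        · rw [CNF_of_eps hxe] at hp
          simp only [List.mem_singleton] at hp
          subst hp
          simpa [Ep_of_eps hxe] using hx
        · exact (Ep_sub hxe hp).trans hx
      have hmem₂ : ∀ q ∈ CNF ω y, Ep q.1 ⊆ S := by
        intro q hq
        by_cases hye : ω ^ y = y
        · rw [CNF_of_eps hye] at hq
          simp only [List.mem_singleton] at hq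
          subst hq
          simpa [Ep_of_eps hye] using hy
        · exact (Ep_sub hye hq).trans hy
      have hcase₁ : ∀ p ∈ CNF ω x, p.1 < x ∨ (p.1 = x ∧ ω ^ x = x) := by
        intro p hp
        by_cases hxe : ω ^ x = x
        · rw [CNF_of_eps hxe] at hp
          simp only [List.mem_singleton] at hp
          subst hp
          exact Or.inr ⟨rfl, hxe⟩
        · exact Or.inl (cnf_fst_lt hxe hp)
      have hcase₂ : ∀ q ∈ CNF ω y, q.1 < y ∨ (q.1 = y ∧ ω ^ y = y) := by
        intro q hq
        by_cases hye : ω ^ y = y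
        · rw [CNF_of_eps hye] at hq
          simp only [List.mem_singleton] at hq
          subst hq
          exact Or.inr ⟨rfl, hye⟩
        · exact Or.inl (cnf_fst_lt hye hq)
      have hmeas : ∀ p ∈ CNF ω x, ∀ q ∈ CNF ω y,
          (max p.1 q.1 < max x y ∨
            (max p.1 q.1 = max x y ∧ p.1 ♯ q.1 < x ♯ y)) := by
        intro p hp q hq
        rcases hcase₁ p hp with hpx | ⟨hpx, hxe⟩
        · rcases hcase₂ q hq with hqy | ⟨hqy, hye⟩
          · exact Or.inl (max_lt (hpx.trans_le (le_max_left x y))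
              (hqy.trans_le (le_max_right x y)))
          · have hle : max p.1 q.1 ≤ max x y := max_le_max hpx.le (le_of_eq hqy)
            rcases lt_or_eq_of_le hle with h | h
            · exact Or.inl h
            · exact Or.inr ⟨h, by rw [hqy]; exact hsum_lt_left hpx y⟩
        · rcases hcase₂ q hq with hqy | ⟨hqy, hye⟩
          · have hle : max p.1 q.1 ≤ max x y := max_le_max (le_of_eq hpx) hqy.le
            rcases lt_or_eq_of_le hle with h | h
            · exact Or.inl h
            · exact Or.inr ⟨h, by rw [hpx]; exact hsum_lt_right hqy x⟩
          · exact absurd ⟨hxe, hye⟩ hboth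
      have H : ∀ p ∈ CNF ω x, ∀ q ∈ CNF ω y,
          (p.1 < q.1 ↔ subst f p.1 < subst f q.1) ∧
          (p.1 = q.1 ↔ subst f p.1 = subst f q.1) :=
        fun p hp q hq =>
          IHiff p.1 q.1 (hmem₁ p hp) (hmem₂ q hq) (hmeas p hp q hq)
      have hgood₁ : EpAux.Good ((CNF ω x).map (fun p => (subst f p.1, p.2))) := by
        constructor
        · rw [List.pairwise_map]
          refine (good_CNF x).1.imp_of_mem ?_
          intro a b ha hb hab
          show subst f b.1 < subst f a.1
          rcases hcase₁ a ha with haa | ⟨hax, hxe⟩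
          · have hba : b.1 < x := lt_trans hab haa
            have := IHiff b.1 a.1 (hmem₁ b hb) (hmem₁ a ha)
              (Or.inl (max_lt (hba.trans_le (le_max_left x y))
                (haa.trans_le (le_max_left x y))))
            exact this.1.mp hab
          · exfalso
            rw [CNF_of_eps hxe] at hb
            simp only [List.mem_singleton] at hb
            rw [hb] at hab
            exact lt_irrefl x (hax ▸ hab)
        · intro p hp
          obtain ⟨q, hq, rfl⟩ := List.mem_map.1 hp
          show 0 < q.2 ∧ q.2 < ω
          exact ⟨Ordinal.CNF.snd_pos hq, Ordinal.CNF.snd_lt one_lt_omega0 hq⟩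
      have hgood₂ : EpAux.Good ((CNF ω y).map (fun p => (subst f p.1, p.2))) := by
        constructor
        · rw [List.pairwise_map]
          refine (good_CNF y).1.imp_of_mem ?_
          intro a b ha hb hab
          show subst f b.1 < subst f a.1
          rcases hcase₂ a ha with haa | ⟨hax, hye⟩
          · have hba : b.1 < y := lt_trans hab haa
            have := IHiff b.1 a.1 (hmem₂ b hb) (hmem₂ a ha)
              (Or.inl (max_lt (hba.trans_le (le_max_right x y))
                (haa.trans_le (le_max_right x y))))
            exact this.1.mp hab
          · exfalso
            rw [CNF_of_eps hye] at hb
            simp only [List.mem_singleton] at hb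
            rw [hb] at hab
            exact lt_irrefl y (hax ▸ hab)
        · intro p hp
          obtain ⟨q, hq, rfl⟩ := List.mem_map.1 hp
          show 0 < q.2 ∧ q.2 < ω
          exact ⟨Ordinal.CNF.snd_pos hq, Ordinal.CNF.snd_lt one_lt_omega0 hq⟩
      rw [subst_sumL S f hfE hx, subst_sumL S f hfE hy,
        EpAux.sumL_lt_iff hgood₁ hgood₂,
        ← EpAux.lex_map_iff (subst f) _ _ H,
        ← EpAux.sumL_lt_iff (good_CNF x) (good_CNF y),
        show EpAux.sumL (CNF ω x) = x from Ordinal.CNF.foldr ω x,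
        show EpAux.sumL (CNF ω y) = y from Ordinal.CNF.foldr ω y]
  exact key (max x y) (x ♯ y) x y le_rfl le_rfl hx hy

end Main

theorem stmt0 (S : Set Ordinal.{0}) (f : Ordinal → Ordinal)
    (hS : ∀ e ∈ S, IsEpsilon e) (hfE : ∀ e ∈ S, IsEpsilon (f e))
    (hf : StrictMonoOn f S)
    (x y : Ordinal) (hx : Ep x ⊆ S) (hy : Ep y ⊆ S) :
    x < y ↔ subst f x < subst f y := stmt0' S f hS hfE hf x y hx hy
end

section
/- Let f : S → E be a strictly increasing function from a set S of epsilon numbers into the epsilon numbers, and let x be an ordinal with Ep(x) ⊆ S. Then Ep(ω^x) ⊆ S and (ω^x)[f] = ω^{x[f]}. -/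
open Ordinal

theorem stmt9 (S : Set Ordinal.{0}) (f : Ordinal → Ordinal)
    (hS : ∀ e ∈ S, IsEpsilon e) (hfE : ∀ e ∈ S, IsEpsilon (f e))
    (hf : StrictMonoOn f S)
    (x : Ordinal) (hx : Ep x ⊆ S) :
    Ep (ω ^ x) ⊆ S ∧ subst f (ω ^ x) = ω ^ subst f x := by
  by_cases h : ω ^ x = x
  · have hxS : x ∈ S := by
      apply hx
      rw [Ep, dif_pos h]
      rfl
    have hsx : subst f x = f x := by rw [subst, dif_pos h]
    constructor
    · rw [h]; exact hx
    · rw [h, hsx, hfE x hxS]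
  · have hcnf : CNF ω (ω ^ x) = [(x, 1)] := by
      rw [Ordinal.CNF.ne_zero (Ordinal.opow_ne_zero x omega0_ne_zero),
        Ordinal.log_opow one_lt_omega0, Ordinal.div_self (Ordinal.opow_ne_zero x omega0_ne_zero),
        Ordinal.mod_self, Ordinal.CNF.zero_right]
    have h2 : ¬ ω ^ (ω ^ x) = ω ^ x := fun he =>
      h ((Ordinal.opow_right_inj one_lt_omega0).mp he)
    constructor
    · rw [Ep, dif_neg h2]
      intro a ha
      simp only [Set.mem_iUnion] at ha
      obtain ⟨⟨p, hp⟩, hpa⟩ := ha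
      rw [hcnf, List.mem_singleton] at hp
      subst hp
      exact hx hpa
    · rw [subst, dif_neg h2]
      rw [show (List.map (fun p => ω ^ subst f p.1.1 * p.1.2) (CNF ω (ω ^ x)).attach)
          = List.map (fun q => ω ^ subst f q.1 * q.2) (CNF ω (ω ^ x)) from
        List.attach_map_val (l := CNF ω (ω ^ x)) (f := fun q => ω ^ subst f q.1 * q.2), hcnf]
      simp
end
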